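/- Let n ≥ 3 and 1 ≤ p ≤ n-1 be integers. If κ ∈ ℝ^{n-1} lies in the topological closure of the Gårding cone Γ_p^+ and σ_p(κ) > 0, then κ ∈ Γ_p^+, i.e. σ_j(κ) > 0 for all 1 ≤ j ≤ p. -/

import Mathlib

/-- The `j`-th elementary symmetric polynomial of `κ = (κ_1, …, κ_m) ∈ ℝ^m`,
with the conventions `σ_0 = 1` and `σ_j = 0` for `j > m`. -/
noncomputable def esymm (m j : ℕ) (κ : Fin m → ℝ) : ℝ :=
  ∑ s ∈ Finset.powersetCard j (Finset.univ : Finset (Fin m)), ∏ i ∈ s, κ i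

/-- `σ_{k;i}(κ)`: the `k`-th elementary symmetric polynomial of the `m - 1` numbers
`κ_1, …, κ_{i-1}, κ_{i+1}, …, κ_m`. -/
noncomputable def esymmWithout (m k : ℕ) (i : Fin m) (κ : Fin m → ℝ) : ℝ :=
  ∑ s ∈ Finset.powersetCard k ((Finset.univ : Finset (Fin m)).erase i), ∏ j ∈ s, κ j

/-- The Gårding cone `Γ_k^+ = {κ ∈ ℝ^m : σ_j(κ) > 0 for j = 1, …, k}`. -/
def gardingCone (m k : ℕ) : Set (Fin m → ℝ) :=
  {κ | ∀ j, 1 ≤ j → j ≤ k → 0 < esymm m j κ}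

open Polynomial


private lemma rev_lin (r : ℝ) : (X - C r).reverse = 1 - C r * X := by
  have h1 : (X - C r : ℝ[X]) = C 1 * X ^ 1 + C (-r) * X ^ 0 := by
    simp [C_neg]; ring
  rw [reverse, natDegree_X_sub_C, h1, reflect_add, reflect_C_mul_X_pow, reflect_C_mul_X_pow]
  simp [revAt_le]
  ring

private lemma quad_disc (q : ℝ[X]) (h2 : q.natDegree = 2)
    (hr : Multiset.card q.roots = 2) :
    4 * (q.coeff 0 * q.coeff 2) ≤ q.coeff 1 ^ 2 := by
  have hq := C_leadingCoeff_mul_prod_multiset_X_sub_C (p := q) (by rw [hr, h2])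
  obtain ⟨r, s, hrs⟩ := Multiset.card_eq_two.mp hr
  rw [hrs] at hq
  simp only [Multiset.insert_eq_cons, Multiset.map_cons, Multiset.map_singleton,
    Multiset.prod_cons, Multiset.prod_singleton] at hq
  set a := q.leadingCoeff with ha
  have hq2 : q = C a * X ^ 2 + C (-(a * (r + s))) * X ^ 1 + C (a * (r * s)) * X ^ 0 := by
    rw [← hq]; simp only [C_neg, C_add, C_mul]; ring
  have c0 : q.coeff 0 = a * (r * s) := by rw [hq2]; simp [coeff_X_pow]
  have c1 : q.coeff 1 = -(a * (r + s)) := by rw [hq2]; simp [coeff_X_pow]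
  have c2 : q.coeff 2 = a := by rw [hq2]; simp [coeff_X_pow]
  rw [c0, c1, c2]
  nlinarith [sq_nonneg (a * (r - s))]

private lemma rr_deriv {p : ℝ[X]} (h : Multiset.card p.roots = p.natDegree) :
    Multiset.card (derivative p).roots = (derivative p).natDegree ∧
      (derivative p).natDegree = p.natDegree - 1 := by
  have h1 := p.card_roots_le_derivative
  have h2 := (derivative p).card_roots'
  have h3 := p.natDegree_derivative_le
  omega

private lemma rr_iter (k : ℕ) {p : ℝ[X]} (h : Multiset.card p.roots = p.natDegree) :
    Multiset.card (derivative^[k] p).roots = (derivative^[k] p).natDegree ∧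
      (derivative^[k] p).natDegree = p.natDegree - k := by
  induction k with
  | zero => simpa using h
  | succ k ih =>
    rw [Function.iterate_succ_apply']
    obtain ⟨ih1, ih2⟩ := ih
    obtain ⟨a, b⟩ := rr_deriv ih1
    exact ⟨a, by omega⟩

private lemma rev_multiset_prod (s : Multiset ℝ[X]) :
    s.prod.reverse = (s.map reverse).prod := by
  induction s using Multiset.induction_on with
  | empty => rw [Multiset.map_zero, Multiset.prod_zero, ← C_1, reverse_C]
  | cons a s ih => simp [reverse_mul_of_domain, ih]

private lemma rr_reverse {p : ℝ[X]} (h : Multiset.card p.roots = p.natDegree)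
    (h0 : p.coeff 0 ≠ 0) :
    Multiset.card p.reverse.roots = p.reverse.natDegree ∧
      p.reverse.natDegree = p.natDegree := by
  have hp0 : p ≠ 0 := fun hp => h0 (by simp [hp])
  have ha : p.leadingCoeff ≠ 0 := leadingCoeff_ne_zero.mpr hp0
  have hroots0 : ∀ r ∈ p.roots, r ≠ 0 := by
    intro r hr h0'
    subst h0'
    have := isRoot_of_mem_roots hr
    rw [IsRoot, ← coeff_zero_eq_eval_zero] at this
    exact h0 this
  have hfact := C_leadingCoeff_mul_prod_multiset_X_sub_C (p := p) h
  -- reverse p = C leadingCoeff * (roots.map fun r => 1 - C r * X).prod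
  have hrev : p.reverse = C p.leadingCoeff * (p.roots.map fun r => 1 - C r * X).prod := by
    conv_lhs => rw [← hfact]
    rw [reverse_mul_of_domain, reverse_C, rev_multiset_prod]
    simp only [Multiset.map_map, Function.comp_apply]
    congr 1
    exact congrArg Multiset.prod (Multiset.map_congr rfl fun r _ => rev_lin r)
  have hfac2 : ∀ r ∈ p.roots, (1 - C r * X : ℝ[X]) = C (-r) * (X - C r⁻¹) := by
    intro r hr
    have hr0 : r ≠ 0 := hroots0 r hr
    rw [mul_sub, ← C_mul, C_neg]
    field_simp
    rw [C_neg, C_1]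
    ring
  have hcard : Multiset.card p.reverse.roots = p.natDegree := by
    rw [hrev, roots_C_mul _ ha, roots_multiset_prod]
    · rw [Multiset.bind_map]
      have : ∀ r ∈ p.roots, (1 - C r * X : ℝ[X]).roots = {r⁻¹} := by
        intro r hr
        rw [hfac2 r hr, roots_C_mul _ (neg_ne_zero.mpr (hroots0 r hr)), roots_X_sub_C]
      rw [Multiset.bind_congr this, Multiset.bind_singleton, Multiset.card_map, h]
    · simp only [Multiset.mem_map]
      rintro ⟨r, hr, hzero⟩
      have : (1 - C r * X : ℝ[X]).coeff 0 = 1 := by simp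
      rw [hzero] at this
      simp at this
  have h1 := p.reverse.card_roots'
  have h2 := p.reverse_natDegree_le
  omega

private lemma desc1 (a : ℕ) : (a+1).descFactorial a = (a+1).factorial := by
  induction a with
  | zero => rfl
  | succ n ih =>
    rw [Nat.succ_descFactorial_succ, ih, Nat.factorial_succ, Nat.factorial_succ, Nat.factorial_succ]

private lemma desc2 (a : ℕ) : 2 * ((a+2).descFactorial a) = (a+2).factorial := by
  induction a with
  | zero => rfl
  | succ n ih =>
    have h3 : n + 1 + 2 = (n + 2) + 1 := by omega
    rw [h3, Nat.succ_descFactorial_succ, Nat.factorial_succ, ← ih]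
    ring

private lemma newton (a b : ℕ) (x : Fin (a + b + 2) → ℝ) :
    ((a.factorial * (b+2).factorial : ℕ) : ℝ) * esymm (a+b+2) a x *
      ((((a+2).factorial * b.factorial : ℕ)) * esymm (a+b+2) (a+2) x)
    ≤ ((((a+1).factorial * (b+1).factorial : ℕ)) * esymm (a+b+2) (a+1) x) ^ 2 := by
  set f : ℝ[X] := ∏ i : Fin (a+b+2), (X + C (x i)) with hf
  have hmon : ∀ i ∈ (Finset.univ : Finset (Fin (a+b+2))), (X + C (x i)).Monic :=
    fun i _ => monic_X_add_C (x i)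
  have hdeg : f.natDegree = a + b + 2 := by
    rw [hf, natDegree_prod_of_monic _ _ hmon]
    simp
  have hne : f ≠ 0 := (monic_prod_of_monic _ _ hmon).ne_zero
  have hroots : Multiset.card f.roots = a + b + 2 := by
    rw [hf, roots_prod _ _ hne]
    have : ∀ i ∈ (Finset.univ : Finset (Fin (a+b+2))).val,
        (X + C (x i)).roots = {-(x i)} := by
      intro i _
      have : (X + C (x i) : ℝ[X]) = X - C (-(x i)) := by simp
      rw [this, roots_X_sub_C]
    rw [Multiset.bind_congr this, Multiset.bind_singleton]
    simp
  have hcoeff : ∀ k, k ≤ a + b + 2 → f.coeff k = esymm (a+b+2) (a + b + 2 - k) x := by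
    intro k hk
    rw [hf, Finset.prod_X_add_C_coeff _ _ (by simpa using hk)]
    simp [esymm]
  have hrr : Multiset.card f.roots = f.natDegree := by rw [hroots, hdeg]
  -- g = b-th derivative of f
  set g : ℝ[X] := derivative^[b] f with hg
  obtain ⟨grr, gdeg⟩ := rr_iter b hrr
  rw [hdeg] at gdeg
  have gdeg' : g.natDegree = a + 2 := by rw [← hg] at gdeg; omega
  have grr' : Multiset.card g.roots = g.natDegree := by rw [← hg] at grr; exact grr
  have cg : ∀ i, i ≤ 2 →
      g.coeff i = ((i + b).descFactorial b : ℝ) * esymm (a+b+2) (a + 2 - i) x := by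
    intro i hi
    rw [hg, coeff_iterate_derivative, hcoeff (i + b) (by omega), nsmul_eq_mul]
    congr 2
    omega
  by_cases hz : esymm (a+b+2) (a + 2) x = 0
  · rw [hz]
    simp only [mul_zero]
    positivity
  · -- reverse g
    have hg0 : g.coeff 0 ≠ 0 := by
      rw [cg 0 (by norm_num)]
      simp only [Nat.add_sub_cancel, zero_add, Nat.sub_zero]
      exact mul_ne_zero (Nat.cast_ne_zero.mpr (Nat.descFactorial_self b ▸ b.factorial_ne_zero)) hz
    obtain ⟨hrr2, hdeg2⟩ := rr_reverse grr' hg0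
    set h : ℝ[X] := g.reverse with hh
    have hdeg2' : h.natDegree = a + 2 := by rw [hh, hdeg2, gdeg']
    have hrr2' : Multiset.card h.roots = h.natDegree := hrr2
    set q : ℝ[X] := derivative^[a] h with hq
    obtain ⟨qrr, qdeg⟩ := rr_iter a hrr2'
    rw [hdeg2'] at qdeg
    have qdeg' : q.natDegree = 2 := by rw [← hq] at qdeg; omega
    have qrr' : Multiset.card q.roots = 2 := by rw [← hq] at qrr; omega
    have ch : ∀ i, i ≤ 2 → h.coeff (i + a) = g.coeff (2 - i) := by
      intro i hi
      rw [hh, coeff_reverse, gdeg', revAt_le (by omega)]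
      congr 1
      omega
    have cq : ∀ i, i ≤ 2 → q.coeff i = ((i + a).descFactorial a : ℝ) * g.coeff (2 - i) := by
      intro i hi
      rw [hq, coeff_iterate_derivative, nsmul_eq_mul, ch i hi]
    have Q := quad_disc q qdeg' qrr'
    rw [cq 0 (by norm_num), cq 1 (by norm_num), cq 2 (by norm_num)] at Q
    rw [cg 0 (by norm_num), cg 1 (by norm_num), cg 2 (by norm_num)] at Q
    norm_num at Q
    -- now convert constants
    have da : ((a.descFactorial a : ℕ) : ℝ) = a.factorial := by rw [Nat.descFactorial_self]
    have db : ((b.descFactorial b : ℕ) : ℝ) = b.factorial := by rw [Nat.descFactorial_self]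
    have d1a : (((1 + a).descFactorial a : ℕ) : ℝ) = (a+1).factorial := by
      rw [Nat.add_comm 1 a, desc1]
    have d1b : (((1 + b).descFactorial b : ℕ) : ℝ) = (b+1).factorial := by
      rw [Nat.add_comm 1 b, desc1]
    have d2a : (((a+2).factorial : ℕ) : ℝ) = 2 * ((2 + a).descFactorial a : ℕ) := by
      rw [Nat.add_comm 2 a, ← desc2 a]
      push_cast
      ring
    have d2b : (((b+2).factorial : ℕ) : ℝ) = 2 * ((2 + b).descFactorial b : ℕ) := by
      rw [Nat.add_comm 2 b, ← desc2 b]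
      push_cast
      ring
    push_cast
    rw [d2a, d2b, ← da, ← db, ← d1a, ← d1b]
    nlinarith [Q]

private noncomputable def Wt (m k : ℕ) (x : Fin m → ℝ) : ℝ :=
  ((k.factorial * (m - k).factorial : ℕ) : ℝ) * esymm m k x

private lemma esymm_zero_eq (m : ℕ) (x : Fin m → ℝ) : esymm m 0 x = 1 := by
  simp [esymm]

private lemma esymm_continuous (m k : ℕ) : Continuous fun x : Fin m → ℝ => esymm m k x := by
  refine continuous_finset_sum _ fun s _ => continuous_finset_prod _ fun i _ => continuous_apply i

private lemma Wt_continuous (m k : ℕ) : Continuous fun x : Fin m → ℝ => Wt m k x :=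
  continuous_const.mul (esymm_continuous m k)

private lemma newtonW (m j : ℕ) (x : Fin m → ℝ) (hj : 1 ≤ j) (hjm : j + 1 ≤ m) :
    Wt m (j - 1) x * Wt m (j + 1) x ≤ Wt m j x ^ 2 := by
  obtain ⟨a, rfl⟩ : ∃ a, j = a + 1 := ⟨j - 1, by omega⟩
  obtain ⟨b, rfl⟩ : ∃ b, m = a + b + 2 := ⟨m - a - 2, by omega⟩
  have H := newton a b x
  unfold Wt
  simp only [Nat.add_sub_cancel,
    show a + b + 2 - a = b + 2 from by omega,
    show a + b + 2 - (a + 1) = b + 1 from by omega,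
    show a + b + 2 - (a + 1 + 1) = b from by omega,
    show a + 1 + 1 = a + 2 from by omega]
  calc ((a.factorial * (b+2).factorial : ℕ) : ℝ) * esymm (a+b+2) a x *
        ((((a+2).factorial * b.factorial : ℕ)) * esymm (a+b+2) (a+2) x) ≤ _ := H

private lemma Wt_pos {m p : ℕ} {x : Fin m → ℝ} (hx : x ∈ gardingCone m p) :
    ∀ k, k ≤ p → 0 < Wt m k x := by
  intro k hk
  rcases Nat.eq_zero_or_pos k with rfl | hk1
  · rw [Wt, esymm_zero_eq]
    simp [Nat.factorial_pos]
  · exact mul_pos (by positivity) (hx k hk1 hk)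

private lemma ratio_lemma {m p : ℕ} {x : Fin m → ℝ} (hx : x ∈ gardingCone m p)
    (hpm : p ≤ m) :
    ∀ i, i + 1 ≤ p → Wt m (i + 1) x * Wt m 0 x ≤ Wt m 1 x * Wt m i x := by
  intro i
  induction i with
  | zero => intro _; rw [mul_comm]
  | succ i ih =>
    intro hi
    have IH := ih (by omega)
    have N := newtonW m (i + 1) x (by omega) (by omega)
    simp only [Nat.add_sub_cancel] at N
    have p0 := Wt_pos hx 0 (by omega)
    have p1 := Wt_pos hx 1 (by omega)
    have pi := Wt_pos hx i (by omega)
    have pi1 := Wt_pos hx (i + 1) (by omega)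
    have pi2 := Wt_pos hx (i + 2) (by omega)
    have hi2 : i + 1 + 1 = i + 2 := by omega
    rw [hi2]
    nlinarith [IH, N, p0, p1, pi, pi1, pi2]

private lemma maclaurin {m p : ℕ} {x : Fin m → ℝ} (hx : x ∈ gardingCone m p)
    (hpm : p ≤ m) (j : ℕ) (hj : 1 ≤ j) :
    ∀ d, j + d ≤ p → Wt m (j + d) x * Wt m 0 x ^ d ≤ Wt m j x * Wt m 1 x ^ d := by
  intro d
  induction d with
  | zero => intro _; simp
  | succ d ih =>
    intro hd
    have IH := ih (by omega)
    have R := ratio_lemma hx hpm (j + d) (by omega)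
    have p0 := Wt_pos hx 0 (by omega)
    have p1 := Wt_pos hx 1 (by omega)
    have hje : j + (d + 1) = (j + d) + 1 := by omega
    rw [hje]
    calc Wt m ((j + d) + 1) x * Wt m 0 x ^ (d + 1)
        = (Wt m ((j + d) + 1) x * Wt m 0 x) * Wt m 0 x ^ d := by ring
      _ ≤ (Wt m 1 x * Wt m (j + d) x) * Wt m 0 x ^ d := by
          apply mul_le_mul_of_nonneg_right R (by positivity)
      _ = Wt m 1 x * (Wt m (j + d) x * Wt m 0 x ^ d) := by ring
      _ ≤ Wt m 1 x * (Wt m j x * Wt m 1 x ^ d) := by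
          apply mul_le_mul_of_nonneg_left IH (le_of_lt p1)
      _ = Wt m j x * Wt m 1 x ^ (d + 1) := by ring

/-- If `κ` lies in the closure of `Γ_p^+` and `σ_p(κ) > 0`, then `κ ∈ Γ_p^+`. -/
theorem stmt_3 (n p : ℕ) (hn : 3 ≤ n) (hp1 : 1 ≤ p) (hp2 : p ≤ n - 1)
    (κ : Fin (n - 1) → ℝ) (hκ : κ ∈ closure (gardingCone (n - 1) p))
    (hσp : 0 < esymm (n - 1) p κ) :
    κ ∈ gardingCone (n - 1) p := by
  intro j hj1 hjp
  have hp2' : p ≤ n - 1 := hp2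
  -- nonnegativity of esymm on the closure
  have hnonneg : ∀ k, 1 ≤ k → k ≤ p → 0 ≤ esymm (n-1) k κ := by
    intro k hk1 hkp
    have hcl : IsClosed {x : Fin (n-1) → ℝ | 0 ≤ esymm (n-1) k x} :=
      isClosed_le continuous_const (esymm_continuous (n-1) k)
    have hsub : gardingCone (n-1) p ⊆ {x : Fin (n-1) → ℝ | 0 ≤ esymm (n-1) k x} :=
      fun x hx => le_of_lt (hx k hk1 hkp)
    exact closure_minimal hsub hcl hκ
  -- the key inequality transported to the closure
  have hkey : Wt (n-1) p κ * Wt (n-1) 0 κ ^ (p - j) ≤ Wt (n-1) j κ * Wt (n-1) 1 κ ^ (p - j) := by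
    have hcl : IsClosed {x : Fin (n-1) → ℝ |
        Wt (n-1) p x * Wt (n-1) 0 x ^ (p - j) ≤ Wt (n-1) j x * Wt (n-1) 1 x ^ (p - j)} :=
      isClosed_le ((Wt_continuous (n-1) p).mul ((Wt_continuous (n-1) 0).pow _))
        ((Wt_continuous (n-1) j).mul ((Wt_continuous (n-1) 1).pow _))
    have hsub : gardingCone (n-1) p ⊆ {x : Fin (n-1) → ℝ |
        Wt (n-1) p x * Wt (n-1) 0 x ^ (p - j) ≤ Wt (n-1) j x * Wt (n-1) 1 x ^ (p - j)} := by
      intro x hx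
      have := maclaurin hx hp2' j hj1 (p - j) (by omega)
      rwa [show j + (p - j) = p from by omega] at this
    exact closure_minimal hsub hcl hκ
  have hWp : 0 < Wt (n-1) p κ := mul_pos (by positivity) hσp
  have hW0 : 0 < Wt (n-1) 0 κ := by
    rw [Wt, esymm_zero_eq]; simp [Nat.factorial_pos]
  have hWj : 0 ≤ Wt (n-1) j κ :=
    mul_nonneg (by positivity) (hnonneg j hj1 hjp)
  have hW1 : 0 ≤ Wt (n-1) 1 κ :=
    mul_nonneg (by positivity) (hnonneg 1 le_rfl hp1)
  have hL : 0 < Wt (n-1) p κ * Wt (n-1) 0 κ ^ (p - j) := mul_pos hWp (by positivity)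
  have hprod : 0 < Wt (n-1) j κ * Wt (n-1) 1 κ ^ (p - j) := lt_of_lt_of_le hL hkey
  have hWjpos : 0 < Wt (n-1) j κ := by
    rcases lt_or_eq_of_le hWj with h | h
    · exact h
    · exfalso; rw [← h] at hprod; simp at hprod
  rw [Wt] at hWjpos
  by_contra hcon
  push_neg at hcon
  nlinarith [hWjpos, hcon,
    Nat.cast_pos (α := ℝ) |>.mpr (Nat.mul_pos (j.factorial_pos) ((n-1-j).factorial_pos))]
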